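/- Let X be a random variable with the noncentral chi-square distribution with p ≥ 3 degrees of freedom and any noncentrality parameter λ ≥ 0. Then E[1/X] ≤ 1/(p − 2), with equality when λ = 0. -/

import Mathlib

open MeasureTheory ProbabilityTheory Finset

/-- The law of `Z ∼ N(μ, I_p)`: independent coordinates `Zᵢ ∼ N(μᵢ, 1)`.
Then `‖Z‖²` has the noncentral chi-square distribution with `p` degrees of freedom
and noncentrality parameter `λ = ‖μ‖²`. -/
noncomputable def stdGaussianVec (p : ℕ) (μ : Fin p → ℝ) : Measure (Fin p → ℝ) :=
  Measure.pi fun i => gaussianReal (μ i) 1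

open Set Real
open scoped NNReal ENNReal

lemma aux_exp_inv {x : ℝ} (hx : 0 < x) :
    ∫⁻ t in Set.Ioi (0:ℝ), ENNReal.ofReal (Real.exp (-(t * x))) = ENNReal.ofReal x⁻¹ := by
  have hInt : IntegrableOn (fun t : ℝ => Real.exp (-(t * x))) (Set.Ioi 0) := by
    simpa [neg_mul, mul_comm] using exp_neg_integrableOn_Ioi 0 hx
  rw [← ofReal_integral_eq_lintegral_ofReal hInt
      (ae_of_all _ fun t => (Real.exp_pos _).le)]
  congr 1
  have h := integral_comp_mul_right_Ioi (fun u => Real.exp (-u)) 0 hx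
  simp only [zero_mul, smul_eq_mul, integral_exp_neg_Ioi, neg_zero, Real.exp_zero, mul_one] at h
  simpa using h

lemma gauss_mgf {t : ℝ} (ht : 0 < t) (m : ℝ) :
    ∫ x, Real.exp (-(t * x ^ 2)) ∂(gaussianReal m 1) =
      (Real.sqrt (1 + 2 * t))⁻¹ * Real.exp (-(t * m ^ 2) / (1 + 2 * t)) := by
  have h1 : (0:ℝ) < 1 + 2 * t := by linarith
  have ha : (0:ℝ) < t + 1/2 := by linarith
  rw [gaussianReal_of_var_ne_zero m one_ne_zero]
  rw [show gaussianPDF m 1 = fun x => ((Real.toNNReal (gaussianPDFReal m 1 x) : ℝ≥0) : ℝ≥0∞) from rfl]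
  rw [integral_withDensity_eq_integral_smul (measurable_gaussianPDFReal m 1).real_toNNReal]
  have hpt : ∀ x : ℝ,
      (Real.toNNReal (gaussianPDFReal m 1 x)) • Real.exp (-(t * x ^ 2))
        = ((Real.sqrt (2 * π))⁻¹ * Real.exp (-(t * m ^ 2) / (1 + 2 * t)))
            * Real.exp (-(t + 1/2) * (x - m / (1 + 2 * t)) ^ 2) := by
    intro x
    rw [NNReal.smul_def, smul_eq_mul, Real.coe_toNNReal _ (gaussianPDFReal_nonneg m 1 x)]
    unfold gaussianPDFReal
    push_cast
    rw [mul_one, mul_assoc, ← Real.exp_add, mul_assoc, ← Real.exp_add]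
    congr 2
    field_simp
    ring
  simp_rw [hpt]
  rw [integral_const_mul]
  rw [show (fun x : ℝ => Real.exp (-(t + 1/2) * (x - m / (1 + 2 * t)) ^ 2))
      = (fun x : ℝ => (fun y : ℝ => Real.exp (-(t + 1/2) * y ^ 2)) (x - m / (1 + 2 * t))) from rfl,
    integral_sub_right_eq_self (fun y : ℝ => Real.exp (-(t + 1/2) * y ^ 2)) (m / (1 + 2 * t)),
    integral_gaussian]
  have hsq : (Real.sqrt (2 * π))⁻¹ * Real.sqrt (π / (t + 1/2)) = (Real.sqrt (1 + 2 * t))⁻¹ := by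
    rw [← Real.sqrt_inv, ← Real.sqrt_mul (by positivity) _, ← Real.sqrt_inv]
    congr 1
    field_simp
    ring
  calc (Real.sqrt (2*π))⁻¹ * Real.exp (-(t * m ^ 2) / (1 + 2 * t)) * Real.sqrt (π / (t + 1/2))
      = ((Real.sqrt (2*π))⁻¹ * Real.sqrt (π / (t + 1/2))) * Real.exp (-(t * m ^ 2) / (1 + 2 * t)) := by
        ring
    _ = (Real.sqrt (1 + 2 * t))⁻¹ * Real.exp (-(t * m ^ 2) / (1 + 2 * t)) := by rw [hsq]

lemma pi_prod_integral {p : ℕ} (μ : Fin p → ℝ) (f : Fin p → ℝ → ℝ) :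
    ∫ z, ∏ i, f i (z i) ∂(stdGaussianVec p μ) = ∏ i, ∫ x, f i x ∂(gaussianReal (μ i) 1) := by
  letI inst : ∀ i : Fin p, MeasureSpace ℝ := fun i => ⟨gaussianReal (μ i) 1⟩
  exact MeasureTheory.integral_fintype_prod_eq_prod (μ := fun i => gaussianReal (μ i) 1) f

lemma aux_shift {s : ℝ} (hs : 1 < s) :
    IntegrableOn (fun u : ℝ => (1 + u) ^ (-s)) (Set.Ioi (0:ℝ)) ∧
      ∫ u in Set.Ioi (0:ℝ), (1 + u) ^ (-s) = 1 / (s - 1) := by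
  have hmp : MeasurePreserving (fun u : ℝ => u + 1) volume volume :=
    measurePreserving_add_right volume 1
  have hemb : MeasurableEmbedding (fun u : ℝ => u + 1) :=
    (MeasurableEquiv.addRight (1:ℝ)).measurableEmbedding
  have hpre : (fun u : ℝ => u + 1) ⁻¹' (Set.Ioi 1) = Set.Ioi (0:ℝ) := by
    ext u; simp
  have hint : IntegrableOn (fun v : ℝ => v ^ (-s)) (Set.Ioi (1:ℝ)) :=
    integrableOn_Ioi_rpow_of_lt (by linarith) one_pos
  have hval : ∫ v in Set.Ioi (1:ℝ), v ^ (-s) = 1 / (s - 1) := by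
    rw [integral_Ioi_rpow_of_lt (by linarith) one_pos]
    rw [Real.one_rpow, show (-s + 1) = -(s - 1) by ring, div_neg, neg_div, neg_neg]
  constructor
  · have := (hmp.integrableOn_comp_preimage hemb
        (f := fun v : ℝ => v ^ (-s)) (s := Set.Ioi 1)).mpr hint
    rw [hpre] at this
    simpa [Function.comp_def, add_comm] using this
  · have := hmp.setIntegral_preimage_emb hemb (fun v : ℝ => v ^ (-s)) (Set.Ioi 1)
    rw [hpre] at this
    rw [← hval, ← this]
    exact setIntegral_congr_fun measurableSet_Ioi fun u hu => by rw [add_comm]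

lemma aux_tint {s : ℝ} (hs : 1 < s) :
    IntegrableOn (fun t : ℝ => (1 + 2*t) ^ (-s)) (Set.Ioi (0:ℝ)) ∧
      ∫ t in Set.Ioi (0:ℝ), (1 + 2*t) ^ (-s) = 1 / (2*s - 2) := by
  obtain ⟨hi, hv⟩ := aux_shift hs
  constructor
  · have := (integrableOn_Ioi_comp_mul_left_iff (fun u : ℝ => (1 + u) ^ (-s)) 0 two_pos).mpr
      (by simpa using hi)
    simpa using this
  · have h := integral_comp_mul_left_Ioi (fun u : ℝ => (1 + u) ^ (-s)) 0 two_pos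
    simp only [mul_zero, smul_eq_mul] at h
    rw [h, hv]
    field_simp

instance gaussianReal_noAtoms (m : ℝ) : NullSingletonClass (gaussianReal m 1) := by
  refine ⟨fun x => ?_⟩
  rw [gaussianReal_apply m one_ne_zero, setLIntegral_measure_zero _ _ (measure_singleton x)]

/-- If `X` is noncentral chi-square with `p ≥ 3` degrees of freedom and noncentrality
`λ = ‖μ‖² ≥ 0` (i.e. `X = ‖Z‖²` with `Z ∼ N(μ, I_p)`), then `E[1/X] ≤ 1/(p−2)`,
with equality when `λ = 0` (i.e. `μ = 0`). -/
theorem noncentralChiSq_inv_expectation_le {p : ℕ} (hp : 3 ≤ p)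
    (lam : ℝ) (hlam : 0 ≤ lam) (μ : Fin p → ℝ) (hμ : ∑ i, μ i ^ 2 = lam) :
    (∫ z, (∑ i, z i ^ 2)⁻¹ ∂(stdGaussianVec p μ)) ≤ 1 / ((p : ℝ) - 2) ∧
      (lam = 0 →
        (∫ z, (∑ i, z i ^ 2)⁻¹ ∂(stdGaussianVec p μ)) = 1 / ((p : ℝ) - 2)) := by
  set ν := stdGaussianVec p μ with hν
  haveI : IsProbabilityMeasure ν := by
    rw [hν, stdGaussianVec]; infer_instance
  have hp3 : (3:ℝ) ≤ (p:ℝ) := by exact_mod_cast hp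
  set s : ℝ := (p:ℝ)/2 with hsdef
  have hs : 1 < s := by rw [hsdef]; linarith
  have hmeasf : Measurable fun z : Fin p → ℝ => ∑ i, z i ^ 2 :=
    Finset.measurable_sum _ fun i _ => (measurable_pi_apply i).pow_const 2
  have hpos : ∀ᵐ z ∂ν, 0 < ∑ i, z i ^ 2 := by
    have i0 : Fin p := ⟨0, by omega⟩
    have hae : ∀ᵐ z : Fin p → ℝ ∂ν, z i0 ≠ 0 :=
      Measure.ae_eval_ne (μ := fun i => gaussianReal (μ i) 1) i0 0
    filter_upwards [hae] with z hz
    have h2 : 0 < z i0 ^ 2 := by positivity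
    exact lt_of_lt_of_le h2 (Finset.single_le_sum (fun i _ => sq_nonneg (z i)) (mem_univ i0))
  set G : ℝ → ℝ := fun t => (Real.sqrt (1+2*t))⁻¹ ^ p * Real.exp (-(t*lam)/(1+2*t)) with hG
  have hsqrtpow : ∀ t : ℝ, 0 < t → ((Real.sqrt (1+2*t))⁻¹) ^ p = (1+2*t) ^ (-s) := by
    intro t ht
    have h1 : (0:ℝ) < 1+2*t := by linarith
    rw [Real.sqrt_eq_rpow, ← Real.rpow_neg h1.le,
      ← Real.rpow_natCast ((1+2*t) ^ (-(1/2) : ℝ)) p, ← Real.rpow_mul h1.le]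
    congr 1
    rw [hsdef]; ring
  have hInner : ∀ t : ℝ, t ∈ Set.Ioi (0:ℝ) →
      ∫⁻ z, ENNReal.ofReal (Real.exp (-(t * ∑ i, z i ^ 2))) ∂ν = ENNReal.ofReal (G t) := by
    intro t ht
    have ht' : (0:ℝ) < t := ht
    have hintz : Integrable (fun z : Fin p → ℝ => Real.exp (-(t * ∑ i, z i ^ 2))) ν := by
      refine Integrable.mono' (integrable_const 1)
        ((hmeasf.const_mul t).neg.exp).aestronglyMeasurable (ae_of_all _ fun z => ?_)
      rw [Real.norm_eq_abs, abs_of_pos (Real.exp_pos _)]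
      refine Real.exp_le_one_iff.mpr ?_
      have : 0 ≤ t * ∑ i, z i ^ 2 :=
        mul_nonneg ht'.le (Finset.sum_nonneg fun i _ => sq_nonneg _)
      linarith
    rw [← ofReal_integral_eq_lintegral_ofReal hintz (ae_of_all _ fun z => (Real.exp_pos _).le)]
    congr 1
    have hprod : (fun z : Fin p → ℝ => Real.exp (-(t * ∑ i, z i ^ 2)))
        = fun z => ∏ i, Real.exp (-(t * (z i) ^ 2)) := by
      funext z
      rw [← Real.exp_sum]
      congr 1
      rw [Finset.mul_sum, ← Finset.sum_neg_distrib]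
    rw [hprod, pi_prod_integral μ (fun i x => Real.exp (-(t * x ^ 2)))]
    rw [Finset.prod_congr rfl fun i _ => gauss_mgf ht' (μ i)]
    rw [Finset.prod_mul_distrib, Finset.prod_const, ← Real.exp_sum, hG]
    simp only [Finset.card_univ, Fintype.card_fin]
    congr 1
    rw [← Finset.sum_div]
    congr 1
    rw [Finset.sum_neg_distrib, ← Finset.mul_sum, hμ]
  have hchain : ∫⁻ z, ENNReal.ofReal (∑ i, z i ^ 2)⁻¹ ∂ν
      = ∫⁻ t in Set.Ioi (0:ℝ), ENNReal.ofReal (G t) := by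
    calc ∫⁻ z, ENNReal.ofReal (∑ i, z i ^ 2)⁻¹ ∂ν
        = ∫⁻ z, (∫⁻ t in Set.Ioi (0:ℝ), ENNReal.ofReal (Real.exp (-(t * ∑ i, z i ^ 2)))) ∂ν := by
          refine lintegral_congr_ae ?_
          filter_upwards [hpos] with z hz
          rw [aux_exp_inv hz]
      _ = ∫⁻ t in Set.Ioi (0:ℝ), ∫⁻ z, ENNReal.ofReal (Real.exp (-(t * ∑ i, z i ^ 2))) ∂ν := by
          refine lintegral_lintegral_swap (Measurable.aemeasurable ?_)
          apply ENNReal.measurable_ofReal.comp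
          exact ((measurable_snd.mul (hmeasf.comp measurable_fst)).neg).exp
      _ = ∫⁻ t in Set.Ioi (0:ℝ), ENNReal.ofReal (G t) :=
          setLIntegral_congr_fun measurableSet_Ioi hInner
  obtain ⟨hti, htv⟩ := aux_tint hs
  have hup : ∫⁻ t in Set.Ioi (0:ℝ), ENNReal.ofReal ((1+2*t) ^ (-s)) = ENNReal.ofReal (1/(2*s-2)) := by
    rw [← ofReal_integral_eq_lintegral_ofReal hti ?_, htv]
    filter_upwards [ae_restrict_mem measurableSet_Ioi] with t ht
    have : (0:ℝ) < 1+2*t := by have : (0:ℝ) < t := ht; linarith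
    positivity
  have hle : ∫⁻ t in Set.Ioi (0:ℝ), ENNReal.ofReal (G t)
      ≤ ∫⁻ t in Set.Ioi (0:ℝ), ENNReal.ofReal ((1+2*t) ^ (-s)) := by
    refine lintegral_mono_ae ?_
    filter_upwards [ae_restrict_mem measurableSet_Ioi] with t ht
    apply ENNReal.ofReal_le_ofReal
    have ht' : (0:ℝ) < t := ht
    have h1 : (0:ℝ) < 1+2*t := by linarith
    have hexp : Real.exp (-(t*lam)/(1+2*t)) ≤ 1 := by
      refine Real.exp_le_one_iff.mpr ?_
      apply div_nonpos_of_nonpos_of_nonneg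
      · simp [mul_nonneg ht'.le hlam]
      · linarith
    calc G t ≤ (Real.sqrt (1+2*t))⁻¹ ^ p * 1 := by
          refine mul_le_mul_of_nonneg_left hexp (by positivity)
      _ = (1+2*t) ^ (-s) := by rw [mul_one, hsqrtpow t ht']
  have hmain : ∫⁻ z, ENNReal.ofReal (∑ i, z i ^ 2)⁻¹ ∂ν ≤ ENNReal.ofReal (1/(2*s-2)) := by
    rw [hchain, ← hup]; exact hle
  have h2s : 1/(2*s-2) = 1/((p:ℝ)-2) := by rw [hsdef]; ring_nf
  have hnn : 0 ≤ᵐ[ν] fun z : Fin p → ℝ => (∑ i, z i ^ 2)⁻¹ :=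
    ae_of_all _ fun z => inv_nonneg.mpr (Finset.sum_nonneg fun i _ => sq_nonneg _)
  have hval : ∫ z, (∑ i, z i ^ 2)⁻¹ ∂ν
      = (∫⁻ z, ENNReal.ofReal (∑ i, z i ^ 2)⁻¹ ∂ν).toReal :=
    integral_eq_lintegral_of_nonneg_ae hnn hmeasf.inv.aestronglyMeasurable
  have hnn2 : (0:ℝ) ≤ 1/(2*s-2) := by
    apply div_nonneg zero_le_one; linarith
  constructor
  · rw [hval, ← h2s]
    calc (∫⁻ z, ENNReal.ofReal (∑ i, z i ^ 2)⁻¹ ∂ν).toReal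
        ≤ (ENNReal.ofReal (1/(2*s-2))).toReal :=
          ENNReal.toReal_mono ENNReal.ofReal_ne_top hmain
      _ = 1/(2*s-2) := ENNReal.toReal_ofReal hnn2
  · intro h0
    have hGeq : ∀ t : ℝ, t ∈ Set.Ioi (0:ℝ) →
        ENNReal.ofReal (G t) = ENNReal.ofReal ((1+2*t) ^ (-s)) := by
      intro t ht
      have ht' : (0:ℝ) < t := ht
      rw [hG]
      simp only [h0, mul_zero, zero_div, neg_zero, Real.exp_zero, mul_one]
      rw [hsqrtpow t ht']
    have heq : ∫⁻ z, ENNReal.ofReal (∑ i, z i ^ 2)⁻¹ ∂ν = ENNReal.ofReal (1/(2*s-2)) := by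
      rw [hchain, setLIntegral_congr_fun measurableSet_Ioi hGeq, hup]
    rw [hval, heq, ENNReal.toReal_ofReal hnn2, h2s]
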